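/- If L₁ and L₂ are regular languages over a finite alphabet Σ, then their shuffle L₁ ‖ L₂ is a regular language. -/

import Mathlib

variable {α : Type*}

/-- The shuffle of two words: `ε ‖ v = {v}`, `u ‖ ε = {u}`,
`(a·u) ‖ (b·v) = {a}·(u ‖ (b·v)) ∪ {b}·((a·u) ‖ v)`. -/
def wordShuffle : List α → List α → Set (List α)
  | [], v => {v}
  | a :: u, [] => {a :: u}
  | a :: u, b :: v =>
      (fun w => a :: w) '' wordShuffle u (b :: v) ∪ (fun w => b :: w) '' wordShuffle (a :: u) v
  termination_by u v => u.length + v.length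

/-- The shuffle of two languages: `L₁ ‖ L₂ = ⋃ { u ‖ v | u ∈ L₁, v ∈ L₂ }`. -/
def langShuffle (L₁ L₂ : Language α) : Language α :=
  ⋃ u ∈ L₁, ⋃ v ∈ L₂, wordShuffle u v

/-- The left quotient of a language by a symbol: `a\L = { w | a·w ∈ L }`. -/
def leftQuot (a : α) (L : Language α) : Language α :=
  { w | a :: w ∈ L }

lemma nil_mem_wordShuffle_iff (u v : List α) :
    ([] : List α) ∈ wordShuffle u v ↔ u = [] ∧ v = [] := by
  match u, v with
  | [], v => simp [wordShuffle, eq_comm]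
  | a :: u, [] => simp [wordShuffle]
  | a :: u, b :: v => simp [wordShuffle]

lemma wordShuffle_nil_right (u : List α) : wordShuffle u [] = {u} := by
  cases u <;> simp [wordShuffle]

lemma cons_mem_wordShuffle_iff (a : α) (w u v : List α) :
    a :: w ∈ wordShuffle u v ↔
      (∃ u', u = a :: u' ∧ w ∈ wordShuffle u' v) ∨
      (∃ v', v = a :: v' ∧ w ∈ wordShuffle u v') := by
  match u, v with
  | [], v =>
    rw [show wordShuffle [] v = {v} from by simp [wordShuffle]]
    constructor
    · rintro rfl
      exact Or.inr ⟨w, rfl, by simp [wordShuffle]⟩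
    · rintro (⟨u', h, _⟩ | ⟨v', rfl, h⟩)
      · exact absurd h (by simp)
      · have : w = v' := by simpa [wordShuffle] using h
        simp [this]
  | c :: u, [] =>
    rw [wordShuffle_nil_right]
    constructor
    · rintro h
      rw [Set.mem_singleton_iff, List.cons.injEq] at h
      obtain ⟨rfl, rfl⟩ := h
      exact Or.inl ⟨w, rfl, by rw [wordShuffle_nil_right]; rfl⟩
    · rintro (⟨u', h, hw⟩ | ⟨v', h, _⟩)
      · rw [List.cons.injEq] at h
        obtain ⟨rfl, rfl⟩ := h
        rw [wordShuffle_nil_right, Set.mem_singleton_iff] at hw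
        simp [hw]
      · exact absurd h (by simp)
  | c :: u, b :: v =>
    rw [wordShuffle]
    constructor
    · rintro (⟨x, hx, h⟩ | ⟨x, hx, h⟩)
      · obtain ⟨rfl, rfl⟩ : c = a ∧ x = w := by simpa [eq_comm] using h
        exact Or.inl ⟨u, rfl, hx⟩
      · obtain ⟨rfl, rfl⟩ : b = a ∧ x = w := by simpa [eq_comm] using h
        exact Or.inr ⟨v, rfl, hx⟩
    · rintro (⟨u', h, hw⟩ | ⟨v', h, hw⟩)
      · obtain ⟨rfl, rfl⟩ : c = a ∧ u = u' := by simpa using h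
        exact Or.inl ⟨w, hw, rfl⟩
      · obtain ⟨rfl, rfl⟩ : b = a ∧ v = v' := by simpa using h
        exact Or.inr ⟨w, hw, rfl⟩

/-- The shuffle NFA of two DFAs. -/
def shuffleNFA {σ₁ σ₂ : Type} (M₁ : DFA α σ₁) (M₂ : DFA α σ₂) : NFA α (σ₁ × σ₂) where
  step := fun p a => {(M₁.step p.1 a, p.2), (p.1, M₂.step p.2 a)}
  start := {(M₁.start, M₂.start)}
  accept := {p | p.1 ∈ M₁.accept ∧ p.2 ∈ M₂.accept}

lemma NFA.evalFrom_union' {σ : Type*} (M : NFA α σ) (S T : Set σ) (w : List α) :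
    M.evalFrom (S ∪ T) w = M.evalFrom S w ∪ M.evalFrom T w := by
  induction w generalizing S T with
  | nil => rfl
  | cons a w ih =>
    have : M.stepSet (S ∪ T) a = M.stepSet S a ∪ M.stepSet T a := by
      exact Set.biUnion_union S T _
    show M.evalFrom (M.stepSet (S ∪ T) a) w = _
    rw [this, ih]
    rfl

lemma shuffleNFA_key {σ₁ σ₂ : Type} (M₁ : DFA α σ₁) (M₂ : DFA α σ₂)
    (w : List α) (p : σ₁) (q : σ₂) :
    (∃ x ∈ (shuffleNFA M₁ M₂).accept, x ∈ (shuffleNFA M₁ M₂).evalFrom {(p, q)} w) ↔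
      ∃ u v : List α, w ∈ wordShuffle u v ∧
        M₁.evalFrom p u ∈ M₁.accept ∧ M₂.evalFrom q v ∈ M₂.accept := by
  induction w generalizing p q with
  | nil =>
    simp only [NFA.evalFrom_nil, Set.mem_singleton_iff]
    constructor
    · rintro ⟨x, hx, rfl⟩
      exact ⟨[], [], by simp [wordShuffle], hx.1, hx.2⟩
    · rintro ⟨u, v, hw, h1, h2⟩
      obtain ⟨rfl, rfl⟩ := (nil_mem_wordShuffle_iff u v).mp hw
      exact ⟨(p, q), ⟨h1, h2⟩, rfl⟩
  | cons a w ih =>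
    have hstep : (shuffleNFA M₁ M₂).evalFrom {(p, q)} (a :: w) =
        (shuffleNFA M₁ M₂).evalFrom {(M₁.step p a, q)} w ∪
        (shuffleNFA M₁ M₂).evalFrom {(p, M₂.step q a)} w := by
      show (shuffleNFA M₁ M₂).evalFrom ((shuffleNFA M₁ M₂).stepSet {(p, q)} a) w = _
      have : (shuffleNFA M₁ M₂).stepSet {(p, q)} a =
          ({(M₁.step p a, q)} : Set (σ₁ × σ₂)) ∪ {(p, M₂.step q a)} := by
        ext x
        simp only [NFA.stepSet, shuffleNFA, Set.mem_singleton_iff, Set.iUnion_iUnion_eq_left,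
          Set.mem_insert_iff, Set.mem_union]
      rw [this, NFA.evalFrom_union']
    rw [hstep]
    constructor
    · rintro ⟨x, hx, hmem | hmem⟩
      · obtain ⟨u, v, hw, h1, h2⟩ := (ih (M₁.step p a) q).mp ⟨x, hx, hmem⟩
        exact ⟨a :: u, v, (cons_mem_wordShuffle_iff a w _ v).mpr (Or.inl ⟨u, rfl, hw⟩), h1, h2⟩
      · obtain ⟨u, v, hw, h1, h2⟩ := (ih p (M₂.step q a)).mp ⟨x, hx, hmem⟩
        exact ⟨u, a :: v, (cons_mem_wordShuffle_iff a w u _).mpr (Or.inr ⟨v, rfl, hw⟩), h1, h2⟩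
    · rintro ⟨u, v, hw, h1, h2⟩
      rcases (cons_mem_wordShuffle_iff a w u v).mp hw with ⟨u', rfl, hw'⟩ | ⟨v', rfl, hw'⟩
      · obtain ⟨x, hx, hm⟩ := (ih (M₁.step p a) q).mpr ⟨u', v, hw', h1, h2⟩
        exact ⟨x, hx, Or.inl hm⟩
      · obtain ⟨x, hx, hm⟩ := (ih p (M₂.step q a)).mpr ⟨u, v', hw', h1, h2⟩
        exact ⟨x, hx, Or.inr hm⟩

theorem isRegular_langShuffle [Fintype α] {L₁ L₂ : Language α}
    (h₁ : L₁.IsRegular) (h₂ : L₂.IsRegular) : (langShuffle L₁ L₂).IsRegular := by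
  obtain ⟨σ₁, _, M₁, rfl⟩ := h₁
  obtain ⟨σ₂, _, M₂, rfl⟩ := h₂
  refine ⟨Set (σ₁ × σ₂), Fintype.ofFinite _, (shuffleNFA M₁ M₂).toDFA, ?_⟩
  rw [NFA.toDFA_correct]
  ext w
  rw [NFA.mem_accepts]
  show (∃ x ∈ (shuffleNFA M₁ M₂).accept,
      x ∈ (shuffleNFA M₁ M₂).evalFrom {(M₁.start, M₂.start)} w) ↔ _
  rw [shuffleNFA_key]
  constructor
  · rintro ⟨u, v, hw, h1, h2⟩
    exact Set.mem_biUnion h1 (Set.mem_biUnion h2 hw)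
  · intro hw
    obtain ⟨u, h1, hw⟩ := Set.mem_iUnion₂.mp hw
    obtain ⟨v, h2, hw⟩ := Set.mem_iUnion₂.mp hw
    exact ⟨u, v, hw, h1, h2⟩
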